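/- Let α, υ_1, υ_2 > 0 with α > 1 and υ_1 ≠ υ_2. Then for all x ≥ (ln α)/υ_1: 1 − ∫_0^x max(0, 1 − α e^{−υ_1(x−y)}) · υ_2 e^{−υ_2 y} dy = (1/(υ_1 − υ_2)) · (α^{υ_2/υ_1} υ_1 e^{−υ_2 x} − α υ_2 e^{−υ_1 x}). -/

import Mathlib

set_option maxHeartbeats 1000000

private lemma expA_aux (L u1 u2 x : ℝ) (h1 : u1 ≠ 0) :
    L * (u2 / u1) + -u2 * x = -u2 * (x - L / u1) := by
  field_simp; ring

private lemma expB_aux (L u1 u2 x : ℝ) (h1 : u1 ≠ 0) :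
    L + -u1 * x + (u1 - u2) * (x - L / u1) = L * (u2 / u1) + -u2 * x := by
  field_simp; ring

/-- **Stieltjes convolution identity, case `α > 1`, distinct rates (Lem. 1).**
With `ε₁(x) = α e^{−υ₁x}` and `ε₂(x) = e^{−υ₂x}`, `υ₁ ≠ υ₂`, for all `x ≥ (ln α)/υ₁`,
`1 − [1−ε₁]_+ ∗ (1−ε₂)(x) = (α^{υ₂/υ₁} υ₁ e^{−υ₂x} − α υ₂ e^{−υ₁x})/(υ₁−υ₂)`. -/
theorem stieltjes_conv_gt_one_distinct_rates
    (α υ₁ υ₂ : ℝ) (hα : 1 < α) (hυ₁ : 0 < υ₁) (hυ₂ : 0 < υ₂)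
    (hne : υ₁ ≠ υ₂) (x : ℝ) (hx : Real.log α / υ₁ ≤ x) :
    1 - ∫ y in (0:ℝ)..x,
        max 0 (1 - α * Real.exp (-υ₁ * (x - y))) * (υ₂ * Real.exp (-υ₂ * y)) =
      (α ^ (υ₂ / υ₁) * υ₁ * Real.exp (-υ₂ * x) - α * υ₂ * Real.exp (-υ₁ * x)) /
        (υ₁ - υ₂) := by
  set L := Real.log α with hLdef
  have hαpos : (0:ℝ) < α := lt_trans one_pos hα
  have hL : 0 < L := Real.log_pos hα
  set c := x - L / υ₁ with hcdef
  have hc0 : 0 ≤ c := by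
    have := hx
    simp only [hcdef]
    linarith
  have hcx : c ≤ x := by
    have : 0 < L / υ₁ := div_pos hL hυ₁
    simp only [hcdef]; linarith
  have hne' : υ₁ - υ₂ ≠ 0 := sub_ne_zero.mpr hne
  have hexp : ∀ y : ℝ, Real.exp (-υ₁ * (x - y)) * Real.exp (-υ₂ * y)
      = Real.exp (-υ₁ * x) * Real.exp ((υ₁ - υ₂) * y) := by
    intro y; rw [← Real.exp_add, ← Real.exp_add]; ring_nf
  -- key pointwise facts
  have hmax0 : ∀ y ∈ Set.uIcc c x,
      max 0 (1 - α * Real.exp (-υ₁ * (x - y))) * (υ₂ * Real.exp (-υ₂ * y)) = 0 := by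
    intro y hy
    rw [Set.uIcc_of_le hcx] at hy
    have hyc : c ≤ y := hy.1
    have h1 : υ₁ * (x - y) ≤ L := by
      have : x - y ≤ L / υ₁ := by simp only [hcdef] at hyc; linarith
      calc υ₁ * (x - y) ≤ υ₁ * (L / υ₁) := by nlinarith
        _ = L := by field_simp
    have h2 : Real.exp (-L) ≤ Real.exp (-υ₁ * (x - y)) := by
      apply Real.exp_le_exp.mpr; linarith
    have h3 : Real.exp (-L) = 1 / α := by
      rw [Real.exp_neg, hLdef, Real.exp_log hαpos]; ring
    have h4 : 1 ≤ α * Real.exp (-υ₁ * (x - y)) := by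
      rw [h3] at h2
      calc (1:ℝ) = α * (1/α) := by field_simp
        _ ≤ α * Real.exp (-υ₁ * (x - y)) := by nlinarith
    rw [max_eq_left (by linarith)]; ring
  have hmax1 : ∀ y ∈ Set.uIcc 0 c,
      max 0 (1 - α * Real.exp (-υ₁ * (x - y))) * (υ₂ * Real.exp (-υ₂ * y))
      = υ₂ * Real.exp (-υ₂ * y) - α * υ₂ * Real.exp (-υ₁ * x) * Real.exp ((υ₁ - υ₂) * y) := by
    intro y hy
    rw [Set.uIcc_of_le hc0] at hy
    have hyc : y ≤ c := hy.2
    have h1 : L ≤ υ₁ * (x - y) := by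
      have : L / υ₁ ≤ x - y := by simp only [hcdef] at hyc; linarith
      calc L = υ₁ * (L / υ₁) := by field_simp
        _ ≤ υ₁ * (x - y) := by nlinarith
    have h2 : Real.exp (-υ₁ * (x - y)) ≤ Real.exp (-L) := by
      apply Real.exp_le_exp.mpr; linarith
    have h3 : Real.exp (-L) = 1 / α := by
      rw [Real.exp_neg, hLdef, Real.exp_log hαpos]; ring
    have h4 : α * Real.exp (-υ₁ * (x - y)) ≤ 1 := by
      rw [h3] at h2
      calc α * Real.exp (-υ₁ * (x - y)) ≤ α * (1/α) := by nlinarith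
        _ = 1 := by field_simp
    rw [max_eq_right (by linarith)]
    linear_combination (-(α*υ₂)) * hexp y
  -- split integral
  have hsplit : ∫ y in (0:ℝ)..x,
      max 0 (1 - α * Real.exp (-υ₁ * (x - y))) * (υ₂ * Real.exp (-υ₂ * y))
      = (∫ y in (0:ℝ)..c,
          max 0 (1 - α * Real.exp (-υ₁ * (x - y))) * (υ₂ * Real.exp (-υ₂ * y)))
        + ∫ y in c..x,
          max 0 (1 - α * Real.exp (-υ₁ * (x - y))) * (υ₂ * Real.exp (-υ₂ * y)) := by
    have hcont : Continuous (fun y =>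
        max 0 (1 - α * Real.exp (-υ₁ * (x - y))) * (υ₂ * Real.exp (-υ₂ * y))) := by
      apply Continuous.mul
      · exact continuous_const.max (by continuity)
      · continuity
    rw [intervalIntegral.integral_add_adjacent_intervals] <;>
      exact hcont.intervalIntegrable _ _
  have hzero : (∫ y in c..x,
      max 0 (1 - α * Real.exp (-υ₁ * (x - y))) * (υ₂ * Real.exp (-υ₂ * y))) = 0 := by
    rw [intervalIntegral.integral_congr hmax0]
    simp
  have hmain : (∫ y in (0:ℝ)..c,
      max 0 (1 - α * Real.exp (-υ₁ * (x - y))) * (υ₂ * Real.exp (-υ₂ * y)))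
      = ∫ y in (0:ℝ)..c,
        (υ₂ * Real.exp (-υ₂ * y) - α * υ₂ * Real.exp (-υ₁ * x) * Real.exp ((υ₁ - υ₂) * y)) :=
    intervalIntegral.integral_congr hmax1
  -- compute the integral via antiderivative
  set F : ℝ → ℝ := fun y =>
    -Real.exp (-υ₂ * y) - α * υ₂ * Real.exp (-υ₁ * x) * Real.exp ((υ₁ - υ₂) * y) / (υ₁ - υ₂)
    with hF
  have hderiv : ∀ y ∈ Set.uIcc (0:ℝ) c, HasDerivAt F
      (υ₂ * Real.exp (-υ₂ * y) - α * υ₂ * Real.exp (-υ₁ * x) * Real.exp ((υ₁ - υ₂) * y)) y := by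
    intro y _
    have d1 : HasDerivAt (fun y => Real.exp (-υ₂ * y)) (-υ₂ * Real.exp (-υ₂ * y)) y := by
      have := ((hasDerivAt_id y).const_mul (-υ₂)).exp
      simpa [mul_comm] using this
    have d2 : HasDerivAt (fun y => Real.exp ((υ₁ - υ₂) * y))
        ((υ₁ - υ₂) * Real.exp ((υ₁ - υ₂) * y)) y := by
      have := ((hasDerivAt_id y).const_mul (υ₁ - υ₂)).exp
      simpa [mul_comm] using this
    have := (d1.neg).sub (((d2.const_mul (α * υ₂ * Real.exp (-υ₁ * x)))).div_const (υ₁ - υ₂))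
    refine this.congr_deriv ?_
    rw [mul_div_assoc, mul_div_cancel_left₀ _ hne']
    ring
  have hint : (∫ y in (0:ℝ)..c,
      (υ₂ * Real.exp (-υ₂ * y) - α * υ₂ * Real.exp (-υ₁ * x) * Real.exp ((υ₁ - υ₂) * y)))
      = F c - F 0 := by
    apply intervalIntegral.integral_eq_sub_of_hasDerivAt hderiv
    apply Continuous.intervalIntegrable
    fun_prop
  -- exponent identities
  have hA : α ^ (υ₂ / υ₁) * Real.exp (-υ₂ * x) = Real.exp (-υ₂ * c) := by
    rw [Real.rpow_def_of_pos hαpos, ← Real.exp_add]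
    congr 1
    rw [hcdef]
    exact expA_aux L υ₁ υ₂ x hυ₁.ne'
  have hB : α * Real.exp (-υ₁ * x) * Real.exp ((υ₁ - υ₂) * c)
      = α ^ (υ₂ / υ₁) * Real.exp (-υ₂ * x) := by
    rw [Real.rpow_def_of_pos hαpos, ← Real.exp_add]
    nth_rewrite 1 [show α = Real.exp L from (Real.exp_log hαpos).symm]
    rw [← Real.exp_add, ← Real.exp_add]
    congr 1
    rw [hcdef, hLdef]
    exact expB_aux (Real.log α) υ₁ υ₂ x hυ₁.ne'
  rw [hsplit, hzero, hmain, hint]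
  simp only [hF]
  rw [show Real.exp (-υ₂ * (0:ℝ)) = 1 by norm_num,
      show Real.exp ((υ₁ - υ₂) * (0:ℝ)) = 1 by norm_num]
  rw [← hA]
  field_simp
  simp only [neg_mul] at hB ⊢
  linear_combination υ₂ * hB
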